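/- Let K be an absorptive, fully-continuous commutative semiring. Then the infinitary power is additive: for all a, b ∈ K, (a + b)^∞ = a^∞ + b^∞, where x^∞ := ⨅_{n ∈ ℕ} x^n. -/

import Mathlib

/-- An absorptive, fully-continuous commutative semiring: a commutative semiring
whose natural order (`a ≤ b ↔ a + b = b`) is a complete lattice, with `1 + a = 1`,
and such that addition and multiplication commute with suprema and infima of
nonempty chains. -/
class AbsorptiveFC (K : Type*) extends CommSemiring K, CompleteLattice K where
  absorb : ∀ a : K, 1 + a = 1
  le_iff_add : ∀ a b : K, a ≤ b ↔ a + b = b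
  add_sSup_chain : ∀ (a : K) (C : Set K), C.Nonempty → IsChain (· ≤ ·) C →
    a + sSup C = sSup ((fun c => a + c) '' C)
  add_sInf_chain : ∀ (a : K) (C : Set K), C.Nonempty → IsChain (· ≤ ·) C →
    a + sInf C = sInf ((fun c => a + c) '' C)
  mul_sSup_chain : ∀ (a : K) (C : Set K), C.Nonempty → IsChain (· ≤ ·) C →
    a * sSup C = sSup ((fun c => a * c) '' C)
  mul_sInf_chain : ∀ (a : K) (C : Set K), C.Nonempty → IsChain (· ≤ ·) C →
    a * sInf C = sInf ((fun c => a * c) '' C)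

/-- The infinitary power `a^∞ = ⨅ n, a ^ n`. -/
noncomputable def ipow {K : Type*} [AbsorptiveFC K] (a : K) : K := ⨅ n : ℕ, a ^ n

section Aux
variable {K : Type*} [AbsorptiveFC K]

lemma AFC.lea (a b : K) : a ≤ b ↔ a + b = b := AbsorptiveFC.le_iff_add a b

lemma AFC.add_idem (a : K) : a + a = a := by
  have h : (1 : K) + 1 = 1 := AbsorptiveFC.absorb 1
  calc a + a = a * (1 + 1) := by ring
    _ = a := by rw [h, mul_one]

lemma AFC.le_one (a : K) : a ≤ 1 :=
  (AFC.lea a 1).2 (by rw [add_comm]; exact AbsorptiveFC.absorb a)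

lemma AFC.zero_le' (a : K) : (0 : K) ≤ a := (AFC.lea 0 a).2 (zero_add a)

lemma AFC.add_le {a b c : K} (h1 : a ≤ c) (h2 : b ≤ c) : a + b ≤ c := by
  rw [AFC.lea] at h1 h2 ⊢
  rw [add_assoc, h2, h1]

lemma AFC.le_add_left (a b : K) : a ≤ a + b := by
  rw [AFC.lea, ← add_assoc, AFC.add_idem]

lemma AFC.le_add_right (a b : K) : b ≤ a + b := by
  rw [add_comm]; exact AFC.le_add_left b a

lemma AFC.mul_le_mul_left (a : K) {c d : K} (h : c ≤ d) : a * c ≤ a * d := by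
  rw [AFC.lea] at h ⊢
  rw [← mul_add, h]

lemma AFC.mul_le_mul {a b c d : K} (h1 : a ≤ b) (h2 : c ≤ d) : a * c ≤ b * d := by
  refine le_trans ?_ (AFC.mul_le_mul_left b h2)
  rw [mul_comm a c, mul_comm b c]
  exact AFC.mul_le_mul_left c h1

lemma AFC.pow_le_one (a : K) (n : ℕ) : a ^ n ≤ 1 := by
  induction n with
  | zero => simp
  | succ k ih =>
    rw [pow_succ]
    calc a ^ k * a ≤ 1 * 1 := AFC.mul_le_mul ih (AFC.le_one a)
      _ = 1 := mul_one 1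

lemma AFC.pow_anti (a : K) {m n : ℕ} (h : m ≤ n) : a ^ n ≤ a ^ m := by
  calc a ^ n = a ^ m * a ^ (n - m) := by rw [← pow_add, Nat.add_sub_cancel' h]
    _ ≤ a ^ m * 1 := AFC.mul_le_mul_left _ (AFC.pow_le_one a _)
    _ = a ^ m := mul_one _

lemma AFC.pow_le_pow {a b : K} (h : a ≤ b) (n : ℕ) : a ^ n ≤ b ^ n := by
  induction n with
  | zero => simp
  | succ k ih => rw [pow_succ, pow_succ]; exact AFC.mul_le_mul ih h

lemma AFC.natCast_le_one (n : ℕ) : (n : K) ≤ 1 := by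
  induction n with
  | zero => exact_mod_cast AFC.zero_le' 1
  | succ k ih =>
    push_cast
    exact AFC.add_le ih le_rfl

lemma AFC.sum_le {ι : Type*} {s : Finset ι} {f : ι → K} {c : K}
    (h : ∀ i ∈ s, f i ≤ c) : ∑ i ∈ s, f i ≤ c := by
  classical
  induction s using Finset.induction_on with
  | empty => simpa using AFC.zero_le' c
  | insert _ _ hx ih =>
    rename_i x s'
    rw [Finset.sum_insert hx]
    exact AFC.add_le (h x (Finset.mem_insert_self _ _))
      (ih fun i hi => h i (Finset.mem_insert_of_mem hi))

lemma AFC.key (a b : K) (m n : ℕ) : (a + b) ^ (m + n) ≤ a ^ m + b ^ n := by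
  rw [add_pow]
  apply AFC.sum_le
  intro i hi
  rcases le_or_gt m i with h | h
  · refine le_trans ?_ (AFC.le_add_left (a ^ m) (b ^ n))
    calc a ^ i * b ^ (m + n - i) * ((m + n).choose i : K)
        ≤ a ^ m * 1 * 1 :=
          AFC.mul_le_mul (AFC.mul_le_mul (AFC.pow_anti a h) (AFC.pow_le_one b _))
            (AFC.natCast_le_one _)
      _ = a ^ m := by ring
  · refine le_trans ?_ (AFC.le_add_right (a ^ m) (b ^ n))
    have hn : n ≤ m + n - i := by omega
    calc a ^ i * b ^ (m + n - i) * ((m + n).choose i : K)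
        ≤ 1 * b ^ n * 1 :=
          AFC.mul_le_mul (AFC.mul_le_mul (AFC.pow_le_one a _) (AFC.pow_anti b hn))
            (AFC.natCast_le_one _)
      _ = b ^ n := by ring

lemma AFC.add_iInf_pow (x a : K) : x + ipow a = ⨅ n : ℕ, (x + a ^ n) := by
  have hchain : IsChain (· ≤ ·) (Set.range fun n : ℕ => a ^ n) := by
    rintro _ ⟨i, rfl⟩ _ ⟨j, rfl⟩ _
    rcases le_total i j with h | h
    · exact Or.inr (AFC.pow_anti a h)
    · exact Or.inl (AFC.pow_anti a h)
  have := AbsorptiveFC.add_sInf_chain x (Set.range fun n : ℕ => a ^ n)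
    (Set.range_nonempty _) hchain
  rw [ipow, iInf, this, ← Set.range_comp, iInf]
  rfl

end Aux

/-- the infinitary power is additive: `(a+b)^∞ = a^∞ + b^∞`. -/
theorem ipow_add {K : Type*} [AbsorptiveFC K] (a b : K) :
    ipow (a + b) = ipow a + ipow b := by
  apply le_antisymm
  · rw [show ipow a + ipow b = ipow b + ipow a from add_comm _ _, AFC.add_iInf_pow]
    apply le_iInf; intro m
    rw [show ipow b + a ^ m = a ^ m + ipow b from add_comm _ _, AFC.add_iInf_pow]
    apply le_iInf; intro n
    exact le_trans (iInf_le (fun k : ℕ => (a + b) ^ k) (m + n)) (AFC.key a b m n)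
  · refine AFC.add_le ?_ ?_
    · exact le_iInf fun n => le_trans (iInf_le _ n) (AFC.pow_le_pow (AFC.le_add_left a b) n)
    · exact le_iInf fun n => le_trans (iInf_le _ n) (AFC.pow_le_pow (AFC.le_add_right a b) n)
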